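/- Let G be a compact convex subset of ℝ^M, let R_1, ..., R_K : G → ℝ be continuous, and let R* = max_{p ∈ G} min_{i ∈ {1,...,K}} R_i(p), attained at p*. Define B = { i : R_i(p*) = R* }. Then B is nonempty, R* < R_j(p*) for all j ∉ B, and p* is a local maximum for the set B in the following sense: there exists ε > 0 such that for every p ∈ G with ‖p − p*‖ < ε, there exists some i ∈ B with R_i(p) ≤ R_i(p*). -/
import Mathlib

/-- Lemma 1 of the paper: necessary condition for maximin
optimality — the bottleneck set B is nonempty, non-bottleneck functions are
strictly above R*, and p* is a local simultaneous maximum for B. -/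
theorem stmt_1 {M K : ℕ} (hK : 0 < K)
    (G : Set (EuclideanSpace ℝ (Fin M)))
    (hGne : G.Nonempty) (hGcomp : IsCompact G) (hGconv : Convex ℝ G)
    (R : Fin K → EuclideanSpace ℝ (Fin M) → ℝ)
    (hR : ∀ i, ContinuousOn (R i) G)
    (pstar : EuclideanSpace ℝ (Fin M)) (hpstar : pstar ∈ G)
    (hopt : ∀ p ∈ G, (⨅ i : Fin K, R i p) ≤ ⨅ i : Fin K, R i pstar)
    (Rstar : ℝ) (hRstar : Rstar = ⨅ i : Fin K, R i pstar)
    (B : Set (Fin K)) (hB : B = {i | R i pstar = Rstar}) :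
    B.Nonempty ∧ (∀ j ∉ B, Rstar < R j pstar) ∧
      ∃ ε > 0, ∀ p ∈ G, ‖p - pstar‖ < ε → ∃ i ∈ B, R i p ≤ R i pstar := by
  haveI : Nonempty (Fin K) := ⟨⟨0, hK⟩⟩
  -- the infimum at pstar is attained
  obtain ⟨i0, hi0⟩ : ∃ i0, ∀ i, R i0 pstar ≤ R i pstar := Finite.exists_min (fun i => R i pstar)
  have hattain : R i0 pstar = ⨅ i, R i pstar :=
    le_antisymm (le_ciInf hi0) (ciInf_le (Finite.bddBelow_range _) i0)
  have hBne : B.Nonempty := ⟨i0, by rw [hB]; exact hattain.trans hRstar.symm⟩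
  have hle : ∀ j, Rstar ≤ R j pstar := by
    intro j; rw [hRstar]; exact ciInf_le (Finite.bddBelow_range _) j
  have hlt : ∀ j ∉ B, Rstar < R j pstar := by
    intro j hj
    rcases lt_or_eq_of_le (hle j) with h | h
    · exact h
    · exact absurd (by rw [hB]; exact h.symm) hj
  refine ⟨hBne, hlt, ?_⟩
  -- choose radii
  have hδ : ∀ j : Fin K, ∃ δ > 0, ∀ p ∈ G, dist p pstar < δ → j ∉ B → Rstar < R j p := by
    intro j
    by_cases hj : j ∈ B
    · exact ⟨1, one_pos, fun p _ _ h => absurd hj h⟩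
    · have hcont : ContinuousWithinAt (R j) G pstar := (hR j).continuousWithinAt hpstar
      have hev : ∀ᶠ p in nhdsWithin pstar G, Rstar < R j p :=
        hcont.eventually (eventually_gt_nhds (hlt j hj))
      obtain ⟨δ, hδpos, hδ⟩ := Metric.nhdsWithin_basis_ball.eventually_iff.mp hev
      exact ⟨δ, hδpos, fun p hp hd _ => hδ ⟨Metric.mem_ball.mpr hd, hp⟩⟩
  choose δ hδpos hδspec using hδ
  have hne : (Finset.univ : Finset (Fin K)).Nonempty := Finset.univ_nonempty
  refine ⟨Finset.univ.inf' hne δ, ?_, ?_⟩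
  · rw [gt_iff_lt, Finset.lt_inf'_iff]; exact fun i _ => hδpos i
  · intro p hp hnorm
    obtain ⟨i1, hi1⟩ : ∃ i1, ∀ i, R i1 p ≤ R i p := Finite.exists_min (fun i => R i p)
    have hi1le : R i1 p ≤ Rstar := by
      have h1 : R i1 p ≤ ⨅ i, R i p := le_ciInf hi1
      have h2 := hopt p hp
      rw [hRstar]; exact h1.trans h2
    by_cases hmem : i1 ∈ B
    · refine ⟨i1, hmem, ?_⟩
      have : R i1 pstar = Rstar := by rw [hB] at hmem; exact hmem
      rw [this]; exact hi1le
    · exfalso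
      have hd : dist p pstar < δ i1 := by
        rw [dist_eq_norm]
        exact lt_of_lt_of_le hnorm (Finset.inf'_le _ (Finset.mem_univ i1))
      exact absurd hi1le (not_le.mpr (hδspec i1 p hp hd hmem))
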